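/- arXiv:math/0609480 — 2 statements merged into one kernel-verified Lean document; each statement's English description precedes it below -/
import Mathlib

section
/- Let α > 1 and β > 0 be real numbers, let μ be the Möbius function, and for a natural number k set c_k(α,β) := ∑_{n=1}^∞ μ(n)/n^α (1 - 1/n^β)^k and ĉ_k(α,β) := ∑_{n=1}^∞ μ(n)/n^α exp(-k/n^β). Then there exists a constant C > 0 such that for all natural numbers k ≥ 1, |ĉ_k(α,β) - c_k(α,β)| ≤ C · k^{-(α+β-1)/β}. -/
open Real

private lemma powB' {a b : ℝ} (h0 : 0 ≤ b) (hba : b ≤ a) (k : ℕ) :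
    a ^ (k + 1) - b ^ (k + 1) ≤ (k + 1 : ℝ) * a ^ k * (a - b) := by
  have ha0 : 0 ≤ a := h0.trans hba
  have h2 : 0 ≤ a - b := by linarith
  induction k with
  | zero => norm_num
  | succ k ih =>
    have hbk : b ^ (k+1) ≤ a ^ (k+1) := pow_le_pow_left₀ h0 hba _
    calc a ^ (k+2) - b ^ (k+2) = a * (a ^ (k+1) - b ^ (k+1)) + b ^ (k+1) * (a - b) := by ring
      _ ≤ a * ((k + 1 : ℝ) * a ^ k * (a - b)) + a ^ (k+1) * (a - b) :=
          add_le_add (mul_le_mul_of_nonneg_left ih ha0) (mul_le_mul_of_nonneg_right hbk h2)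
      _ ≤ ((k + 1 : ℕ) + 1 : ℝ) * a ^ (k+1) * (a - b) := by
          have e1 : a * ((k + 1 : ℝ) * a ^ k * (a - b)) ≤ (k+1 : ℝ) * a ^ (k+1) * (a - b) := by
            have : a * ((k + 1 : ℝ) * a ^ k * (a - b)) = (k+1 : ℝ) * (a * a ^ k) * (a - b) := by
              ring
            rw [this, ← pow_succ']
          push_cast
          linarith

private lemma expA' {x : ℝ} (hx : 0 ≤ x) : exp (-x) ≤ 1 - x + x ^ 2 := by
  have h1 : x + 1 ≤ exp x := add_one_le_exp x
  have hmul : exp (-x) * exp x = 1 := by rw [← exp_add]; simp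
  nlinarith [exp_pos x, exp_pos (-x), sq_nonneg x, mul_pos (exp_pos (-x)) (exp_pos x)]

private lemma diffC' {x : ℝ} (hx0 : 0 ≤ x) (hx1 : x ≤ 1) {k : ℕ} (hk : 1 ≤ k) :
    (1 - x) ^ k ≤ exp (-(k * x)) ∧
    exp (-(k * x)) - (1 - x) ^ k ≤ exp 1 * ((k : ℝ) * (x ^ 2 * exp (-(k * x)))) := by
  have hb0 : (0:ℝ) ≤ 1 - x := by linarith
  have hba : 1 - x ≤ exp (-x) := by have := add_one_le_exp (-x); linarith
  have hexpk : exp (-x) ^ k = exp (-(k * x)) := by rw [← exp_nat_mul]; ring_nf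
  have hlow : (1 - x) ^ k ≤ exp (-(k * x)) := by
    rw [← hexpk]; exact pow_le_pow_left₀ hb0 hba k
  refine ⟨hlow, ?_⟩
  obtain ⟨j, rfl⟩ : ∃ j, k = j + 1 := ⟨k - 1, by omega⟩
  have key := powB' hb0 hba j
  have hsub0 : 0 ≤ exp (-x) - (1 - x) := by linarith
  have hsub : exp (-x) - (1 - x) ≤ x ^ 2 := by have := expA' hx0; linarith
  have hj : exp (-x) ^ j ≤ exp 1 * exp (-((j + 1 : ℕ) * x)) := by
    have e1 : exp (-x) ^ j = exp x * exp (-((j + 1 : ℕ) * x)) := by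
      rw [← exp_nat_mul, ← exp_add]
      congr 1
      push_cast
      ring
    rw [e1]
    have : exp x ≤ exp 1 := exp_le_exp.2 hx1
    exact mul_le_mul_of_nonneg_right this (exp_pos _).le
  have hjp : (0:ℝ) ≤ (j:ℝ) + 1 := by positivity
  calc exp (-((j + 1 : ℕ) * x)) - (1 - x) ^ (j + 1)
      = exp (-x) ^ (j + 1) - (1 - x) ^ (j + 1) := by rw [hexpk]
    _ ≤ ((j : ℝ) + 1) * exp (-x) ^ j * (exp (-x) - (1 - x)) := key
    _ ≤ ((j : ℝ) + 1) * (exp 1 * exp (-((j + 1 : ℕ) * x))) * x ^ 2 := by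
        have h1 : ((j : ℝ) + 1) * exp (-x) ^ j ≤ ((j : ℝ) + 1) * (exp 1 * exp (-((j + 1 : ℕ) * x))) :=
          mul_le_mul_of_nonneg_left hj hjp
        have h2 : 0 ≤ ((j : ℝ) + 1) * exp (-x) ^ j := by positivity
        calc ((j : ℝ) + 1) * exp (-x) ^ j * (exp (-x) - (1 - x))
            ≤ ((j : ℝ) + 1) * exp (-x) ^ j * x ^ 2 := mul_le_mul_of_nonneg_left hsub h2
          _ ≤ ((j : ℝ) + 1) * (exp 1 * exp (-((j + 1 : ℕ) * x))) * x ^ 2 :=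
              mul_le_mul_of_nonneg_right h1 (sq_nonneg x)
    _ = exp 1 * (((j + 1 : ℕ) : ℝ) * (x ^ 2 * exp (-((j + 1 : ℕ) * x)))) := by push_cast; ring

private lemma expD' {t : ℝ} (ht : 0 < t) {m : ℕ} (hm : 1 ≤ m) : exp (-t) ≤ (m:ℝ)^m / t^m := by
  have hm0 : (0:ℝ) < m := by exact_mod_cast hm
  have h1 : t^m / (m:ℝ)^m ≤ exp t := by
    have h2 : t/m ≤ exp (t/m) := by have := add_one_le_exp (t/m); linarith
    have h3 : (t/m)^m ≤ exp (t/m) ^ m := pow_le_pow_left₀ (by positivity) h2 m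
    have h4 : exp (t/m) ^ m = exp t := by
      rw [← exp_nat_mul]; congr 1; field_simp
    rw [div_pow] at h3; rwa [h4] at h3
  rw [exp_neg, inv_le_comm₀ (exp_pos t) (by positivity), inv_div]
  exact h1

private lemma summable_shift' (s : ℝ) (hs : 1 < s) (K : ℕ) :
    Summable (fun m : ℕ => ((K + m : ℕ) : ℝ) ^ (-s)) := by
  have h0 : Summable (fun n : ℕ => ((n : ℕ) : ℝ) ^ (-s)) := by
    have := Real.summable_one_div_nat_rpow.2 hs
    refine this.congr fun n => ?_
    rw [one_div, ← Real.rpow_neg (by positivity)]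
  have := (summable_nat_add_iff (f := fun n : ℕ => ((n : ℕ) : ℝ) ^ (-s)) K).2 h0
  refine this.congr fun n => ?_
  simp [add_comm]

private lemma tailE' {s : ℝ} (hs : 1 < s) {N : ℕ} (hN : 1 ≤ N) :
    ∑' m : ℕ, ((N + 1 + m : ℕ) : ℝ) ^ (-s) ≤ (N : ℝ) ^ (1 - s) / (s - 1) := by
  set a : ℕ → ℝ := fun j => ((N + j : ℕ) : ℝ) ^ (1 - s) with ha
  have hs1 : (0:ℝ) < s - 1 := by linarith
  -- per-term bound
  have hterm : ∀ m : ℕ, ((N + 1 + m : ℕ) : ℝ) ^ (-s) ≤ (a m - a (m + 1)) / (s - 1) := by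
    intro m
    set n : ℝ := ((N + 1 + m : ℕ) : ℝ) with hn
    have hn2 : (2:ℝ) ≤ n := by
      rw [hn]; push_cast
      have h1 : (1:ℝ) ≤ N := by exact_mod_cast hN
      have h2 : (0:ℝ) ≤ m := Nat.cast_nonneg m
      linarith
    have hn0 : (0:ℝ) < n := by linarith
    have hnm : ((N + m : ℕ) : ℝ) = n - 1 := by rw [hn]; push_cast; ring
    have hy0 : (0:ℝ) < 1 - 1/n := by
      have : 1/n ≤ 1/2 := by
        apply div_le_div_of_nonneg_left <;> linarith
      linarith
    have hlog : Real.log (1 - 1/n) ≤ -(1/n) := by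
      have := Real.log_le_sub_one_of_pos hy0; linarith
    have hyp : (1:ℝ) + (s - 1) * (1/n) ≤ (1 - 1/n) ^ (1 - s) := by
      rw [Real.rpow_def_of_pos hy0]
      have h1 : (s - 1) * (1/n) ≤ Real.log (1 - 1/n) * (1 - s) := by nlinarith
      have h2 := add_one_le_exp ((s - 1) * (1/n))
      have h3 : exp ((s - 1) * (1/n)) ≤ exp (Real.log (1 - 1/n) * (1 - s)) := exp_le_exp.2 h1
      linarith
    have hmul : (n - 1) = n * (1 - 1/n) := by field_simp
    have hsplit : (n - 1) ^ (1 - s) = n ^ (1 - s) * (1 - 1/n) ^ (1 - s) := by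
      rw [hmul, Real.mul_rpow hn0.le hy0.le]
    have hns : n ^ (1 - s) * (1/n) = n ^ (-s) := by
      rw [one_div, ← Real.rpow_neg_one n, ← Real.rpow_add hn0]
      congr 1; ring
    have key : (s - 1) * n ^ (-s) ≤ (n - 1) ^ (1 - s) - n ^ (1 - s) := by
      have hpos : (0:ℝ) ≤ n ^ (1 - s) := (Real.rpow_pos_of_pos hn0 _).le
      have h4 : n ^ (1 - s) * ((s - 1) * (1/n)) ≤ n ^ (1 - s) * ((1 - 1/n) ^ (1 - s) - 1) := by
        apply mul_le_mul_of_nonneg_left _ hpos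
        linarith
      calc (s - 1) * n ^ (-s) = n ^ (1 - s) * ((s - 1) * (1/n)) := by rw [← hns]; ring
        _ ≤ n ^ (1 - s) * ((1 - 1/n) ^ (1 - s) - 1) := h4
        _ = (n - 1) ^ (1 - s) - n ^ (1 - s) := by rw [hsplit]; ring
    have haRw : a m - a (m + 1) = (n - 1) ^ (1 - s) - n ^ (1 - s) := by
      have e2 : ((N + (m + 1) : ℕ) : ℝ) = n := by rw [hn]; push_cast; ring
      simp only [ha]
      rw [hnm, e2]
    rw [haRw, le_div_iff₀ hs1]
    linarith [key]
  -- telescoping has sum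
  have hanti : ∀ j, a (j + 1) ≤ a j := by
    intro j
    apply Real.rpow_le_rpow_of_nonpos
    · positivity
    · push_cast; linarith
    · linarith
  have hnonneg : ∀ j, 0 ≤ a j - a (j + 1) := fun j => sub_nonneg.2 (hanti j)
  have htend : Filter.Tendsto a Filter.atTop (nhds 0) := by
    have h1 : Filter.Tendsto (fun j : ℕ => ((N + j : ℕ) : ℝ)) Filter.atTop Filter.atTop := by
      have h0 : Filter.Tendsto (fun j : ℕ => (N : ℝ) + (j : ℝ)) Filter.atTop Filter.atTop :=
        Filter.tendsto_atTop_add_const_left _ _ tendsto_natCast_atTop_atTop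
      exact h0.congr fun j => by push_cast; ring
    have h2 := (tendsto_rpow_neg_atTop hs1).comp h1
    refine h2.congr fun j => ?_
    simp only [Function.comp_apply, ha]
    congr 1
    ring
  have hhs : HasSum (fun j => a j - a (j + 1)) (a 0) := by
    rw [hasSum_iff_tendsto_nat_of_nonneg hnonneg]
    have : (fun M => ∑ i ∈ Finset.range M, (a i - a (i + 1))) = fun M => a 0 - a M := by
      funext M; exact Finset.sum_range_sub' a M
    rw [this]
    simpa using (Filter.Tendsto.const_sub (a 0) htend)
  have hsum1 : Summable (fun m : ℕ => ((N + 1 + m : ℕ) : ℝ) ^ (-s)) := summable_shift' s hs (N + 1)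
  have hsum2 : HasSum (fun j => (a j - a (j + 1)) / (s - 1)) (a 0 / (s - 1)) := hhs.div_const _
  have := Summable.tsum_le_tsum hterm hsum1 hsum2.summable
  rw [hsum2.tsum_eq] at this
  have ha0 : a 0 = (N : ℝ) ^ (1 - s) := by rw [ha]; norm_num
  rwa [ha0] at this

open ArithmeticFunction ArithmeticFunction.Moebius in
theorem baezDuarte_fluctuation (α β : ℝ) (hα : 1 < α) (hβ : 0 < β) :
    ∃ C : ℝ, 0 < C ∧ ∀ k : ℕ, 1 ≤ k →
      |(∑' n : ℕ+, (μ (n : ℕ) : ℝ) / (n : ℝ) ^ α * Real.exp (-(k : ℝ) / (n : ℝ) ^ β)) -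
          ∑' n : ℕ+, (μ (n : ℕ) : ℝ) / (n : ℝ) ^ α * (1 - 1 / (n : ℝ) ^ β) ^ k| ≤
        C * (k : ℝ) ^ (-(α + β - 1) / β) := by
  set s : ℝ := α + 2 * β with hs_def
  have hs : 1 < s := by simp only [hs_def]; linarith
  have hs1 : (0:ℝ) < s - 1 := by linarith
  set M : ℕ := ⌈s / β⌉₊ with hM_def
  have hM1 : 1 ≤ M := by
    rw [hM_def]
    have : (0:ℝ) < s / β := by positivity
    exact Nat.ceil_pos.2 this
  have hMs : s ≤ β * M := by
    have h1 : s / β ≤ (M : ℝ) := Nat.le_ceil _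
    calc s = β * (s / β) := by field_simp
      _ ≤ β * M := by nlinarith
  set q : ℝ := β * M - s + 1 with hq_def
  have hq1 : 1 ≤ q := by simp only [hq_def]; linarith
  have hq0 : 0 ≤ q := by linarith
  set Ch : ℝ := exp 1 * (M:ℝ)^M * (2:ℝ) ^ q with hCh_def
  set Ct : ℝ := exp 1 / (s - 1) with hCt_def
  have hChpos : 0 < Ch := by
    have : (0:ℝ) < (M:ℝ)^M := by positivity
    positivity
  have hCtpos : 0 < Ct := by positivity
  refine ⟨Ch + Ct, by positivity, fun k hk => ?_⟩
  have hk0 : (0:ℝ) < k := by exact_mod_cast hk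
  have hk1 : (1:ℝ) ≤ k := by exact_mod_cast hk
  set E : ℝ := -(α + β - 1) / β with hE_def
  -- reindex to ℕ
  set P : ℕ → ℝ := fun m => ((m + 1 : ℕ) : ℝ) with hP_def
  set F : ℕ → ℝ := fun m => (μ (m + 1) : ℝ) / (P m) ^ α * Real.exp (-(k : ℝ) / (P m) ^ β)
    with hF_def
  set G : ℕ → ℝ := fun m => (μ (m + 1) : ℝ) / (P m) ^ α * (1 - 1 / (P m) ^ β) ^ k with hG_def
  have hre1 : (∑' n : ℕ+, (μ (n : ℕ) : ℝ) / (n : ℝ) ^ α * Real.exp (-(k : ℝ) / (n : ℝ) ^ β))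
      = ∑' m : ℕ, F m := by
    rw [← Equiv.tsum_eq Equiv.pnatEquivNat.symm]
    congr 1
  have hre2 : (∑' n : ℕ+, (μ (n : ℕ) : ℝ) / (n : ℝ) ^ α * (1 - 1 / (n : ℝ) ^ β) ^ k)
      = ∑' m : ℕ, G m := by
    rw [← Equiv.tsum_eq Equiv.pnatEquivNat.symm]
    congr 1
  rw [hre1, hre2]
  -- basic facts about P
  have hP0 : ∀ m, (0:ℝ) < P m := fun m => by
    simp only [hP_def]; positivity
  have hP1 : ∀ m, (1:ℝ) ≤ P m := fun m => by
    simp only [hP_def]; exact_mod_cast Nat.one_le_iff_ne_zero.2 (Nat.succ_ne_zero m)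
  have hPb1 : ∀ m, (1:ℝ) ≤ (P m) ^ β := fun m => Real.one_le_rpow (hP1 m) hβ.le
  have hx0 : ∀ m, (0:ℝ) < 1 / (P m) ^ β := fun m => by
    have := hPb1 m; positivity
  have hx1 : ∀ m, 1 / (P m) ^ β ≤ 1 := fun m => by
    rw [div_le_one (by linarith [hPb1 m])]; exact hPb1 m
  have hexp_eq : ∀ m, Real.exp (-(k : ℝ) / (P m) ^ β)
      = Real.exp (-((k:ℝ) * (1 / (P m) ^ β))) := fun m => by
    rw [neg_div, mul_one_div]
  have hmu : ∀ m, |(μ (m + 1) : ℝ)| ≤ 1 := fun m => by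
    have := abs_moebius_le_one (n := m + 1)
    exact_mod_cast this
  have hexp1 : ∀ m, Real.exp (-(k : ℝ) / (P m) ^ β) ≤ 1 := fun m => by
    have h1 : (0:ℝ) < (P m) ^ β := by linarith [hPb1 m]
    have h2 : (0:ℝ) ≤ (k:ℝ) / (P m) ^ β := by positivity
    calc Real.exp (-(k : ℝ) / (P m) ^ β) ≤ Real.exp 0 := by
          apply Real.exp_le_exp.2
          rw [neg_div]
          linarith
      _ = 1 := Real.exp_zero
  -- the dominating sequence
  set B : ℕ → ℝ := fun m => exp 1 * ((k:ℝ) * ((P m) ^ (-s) * Real.exp (-(k : ℝ) / (P m) ^ β)))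
    with hB_def
  have hBnonneg : ∀ m, 0 ≤ B m := fun m => by
    have := (Real.rpow_pos_of_pos (hP0 m) (-s)).le
    simp only [hB_def]; positivity
  -- rpow identity : P^(-s) = 1/P^α * (1/P^β)^2
  have hPs : ∀ m, (P m) ^ (-s) = 1 / (P m) ^ α * (1 / (P m) ^ β) ^ 2 := fun m => by
    have h1 : (P m) ^ s = (P m) ^ α * ((P m) ^ β) ^ 2 := by
      rw [hs_def, Real.rpow_add (hP0 m), ← Real.rpow_natCast ((P m) ^ β) 2,
        ← Real.rpow_mul (hP0 m).le]
      congr 1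
      push_cast
      ring
    rw [Real.rpow_neg (hP0 m).le, h1, mul_inv, ← inv_pow, one_div, one_div]
  -- termwise bound |F - G| ≤ B
  have hFG : ∀ m, |F m - G m| ≤ B m := by
    intro m
    have hd := diffC' (le_of_lt (hx0 m)) (hx1 m) hk
    have hPα : (0:ℝ) < (P m) ^ α := Real.rpow_pos_of_pos (hP0 m) α
    have e1 : F m - G m = (μ (m + 1) : ℝ) / (P m) ^ α *
        (Real.exp (-((k:ℝ) * (1 / (P m) ^ β))) - (1 - 1 / (P m) ^ β) ^ k) := by
      simp only [hF_def, hG_def, hexp_eq m]; ring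
    rw [e1, abs_mul]
    have e2 : |Real.exp (-((k:ℝ) * (1 / (P m) ^ β))) - (1 - 1 / (P m) ^ β) ^ k|
        = Real.exp (-((k:ℝ) * (1 / (P m) ^ β))) - (1 - 1 / (P m) ^ β) ^ k :=
      abs_of_nonneg (by linarith [hd.1])
    rw [e2]
    have e3 : |(μ (m + 1) : ℝ) / (P m) ^ α| ≤ 1 / (P m) ^ α := by
      rw [abs_div, abs_of_pos hPα]
      have := mul_le_mul_of_nonneg_right (hmu m) (inv_nonneg.2 hPα.le)
      simpa [div_eq_mul_inv] using this
    calc |(μ (m + 1) : ℝ) / (P m) ^ α| *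
          (Real.exp (-((k:ℝ) * (1 / (P m) ^ β))) - (1 - 1 / (P m) ^ β) ^ k)
        ≤ (1 / (P m) ^ α) * (exp 1 * ((k : ℝ) * ((1 / (P m) ^ β) ^ 2 *
            Real.exp (-((k:ℝ) * (1 / (P m) ^ β)))))) := by
          apply mul_le_mul e3 hd.2 (by linarith [hd.1]) (by positivity)
      _ = B m := by
          simp only [hB_def, hexp_eq m, hPs m]; ring
  -- summability
  have hsum_of : ∀ t : ℝ, 1 < t → Summable (fun m : ℕ => (P m) ^ (-t)) := by
    intro t ht
    refine (summable_shift' t ht 1).congr fun m => ?_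
    simp only [hP_def]
    congr 2
    omega
  have hsum_s : Summable (fun m : ℕ => (P m) ^ (-s)) := hsum_of s hs
  have hsum_α : Summable (fun m : ℕ => (P m) ^ (-α)) := hsum_of α hα
  have hsummB : Summable B := by
    apply Summable.of_nonneg_of_le hBnonneg (fun m => ?_) ((hsum_s.mul_left (exp 1 * k)))
    have hex : Real.exp (-(k : ℝ) / (P m) ^ β) ≤ 1 := hexp1 m
    have hps := (Real.rpow_pos_of_pos (hP0 m) (-s)).le
    calc B m ≤ exp 1 * ((k:ℝ) * ((P m) ^ (-s) * 1)) := by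
          simp only [hB_def]
          have h3 : (0:ℝ) ≤ (k:ℝ) := hk0.le
          gcongr
      _ = exp 1 * (k:ℝ) * (P m) ^ (-s) := by ring
  have hsumF : Summable F := by
    apply Summable.of_abs
    apply Summable.of_nonneg_of_le (fun m => abs_nonneg _) (fun m => ?_) hsum_α
    have hex : Real.exp (-(k : ℝ) / (P m) ^ β) ≤ 1 := hexp1 m
    have hPα : (0:ℝ) < (P m) ^ α := Real.rpow_pos_of_pos (hP0 m) α
    simp only [hF_def, abs_mul, abs_div]
    rw [abs_of_pos hPα, abs_of_pos (Real.exp_pos _), Real.rpow_neg (hP0 m).le]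
    calc |(μ (m + 1) : ℝ)| / (P m) ^ α * Real.exp (-(k : ℝ) / (P m) ^ β)
        ≤ 1 / (P m) ^ α * 1 := by
          apply mul_le_mul _ hex (Real.exp_pos _).le (by positivity)
          have := mul_le_mul_of_nonneg_right (hmu m) (inv_nonneg.2 hPα.le)
          simpa [div_eq_mul_inv] using this
      _ = ((P m) ^ α)⁻¹ := by ring
  have hsumG : Summable G := by
    apply Summable.of_abs
    apply Summable.of_nonneg_of_le (fun m => abs_nonneg _) (fun m => ?_) hsum_α
    have hb : |(1 - 1 / (P m) ^ β) ^ k| ≤ 1 := by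
      rw [abs_pow]
      apply pow_le_one₀ (abs_nonneg _)
      rw [abs_of_nonneg (by linarith [hx1 m])]
      linarith [hx0 m]
    have hPα : (0:ℝ) < (P m) ^ α := Real.rpow_pos_of_pos (hP0 m) α
    simp only [hG_def, abs_mul, abs_div]
    rw [abs_of_pos hPα, Real.rpow_neg (hP0 m).le]
    calc |(μ (m + 1) : ℝ)| / (P m) ^ α * |(1 - 1 / (P m) ^ β) ^ k|
        ≤ 1 / (P m) ^ α * 1 := by
          apply mul_le_mul _ hb (abs_nonneg _) (by positivity)
          have := mul_le_mul_of_nonneg_right (hmu m) (inv_nonneg.2 hPα.le)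
          simpa [div_eq_mul_inv] using this
      _ = ((P m) ^ α)⁻¹ := by ring
  have hsumFG : Summable (fun m => |F m - G m|) :=
    Summable.of_nonneg_of_le (fun m => abs_nonneg _) hFG hsummB
  -- the ceiling N
  set N : ℕ := ⌈(k:ℝ) ^ (1/β)⌉₊ with hN_def
  have hkb1 : (1:ℝ) ≤ (k:ℝ) ^ (1/β) := Real.one_le_rpow hk1 (by positivity)
  have hkb0 : (0:ℝ) < (k:ℝ) ^ (1/β) := by linarith
  have hN1 : 1 ≤ N := by rw [hN_def]; exact Nat.ceil_pos.2 hkb0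
  have hNlow : (k:ℝ) ^ (1/β) ≤ (N:ℝ) := Nat.le_ceil _
  have hNup : (N:ℝ) ≤ 2 * (k:ℝ) ^ (1/β) := by
    have h1 : (N:ℝ) < (k:ℝ) ^ (1/β) + 1 := by
      rw [hN_def]
      exact Nat.ceil_lt_add_one hkb0.le
    linarith
  have hN0 : (0:ℝ) < (N:ℝ) := by exact_mod_cast hN1
  -- head bound
  have hhead : ∑ i ∈ Finset.range N, B i ≤ Ch * (k:ℝ) ^ E := by
    have hone : ∀ i ∈ Finset.range N, B i ≤
        exp 1 * (M:ℝ)^M * ((k:ℝ) ^ (1 - (M:ℝ)) * (N:ℝ) ^ (β * M - s)) := by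
      intro i hi
      have hiN : (P i) ≤ (N:ℝ) := by
        simp only [hP_def]
        exact_mod_cast Nat.succ_le_of_lt (Finset.mem_range.1 hi)
      have hPb : (0:ℝ) < (P i) ^ β := by linarith [hPb1 i]
      have ht : (0:ℝ) < (k:ℝ) / (P i) ^ β := by positivity
      have hexp : Real.exp (-(k : ℝ) / (P i) ^ β) ≤
          (M:ℝ)^M * (P i) ^ (β * M) / (k:ℝ)^M := by
        have h1 := expD' ht hM1
        rw [← neg_div] at h1
        have h2 : ((k:ℝ) / (P i) ^ β) ^ M = (k:ℝ)^M / (P i) ^ (β * M) := by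
          rw [div_pow]
          congr 1
          rw [← Real.rpow_natCast ((P i) ^ β) M, ← Real.rpow_mul (hP0 i).le]
        rw [h2] at h1
        calc Real.exp (-(k : ℝ) / (P i) ^ β)
            ≤ (M:ℝ)^M / ((k:ℝ)^M / (P i) ^ (β * M)) := h1
          _ = (M:ℝ)^M * (P i) ^ (β * M) / (k:ℝ)^M := by
              rw [div_div_eq_mul_div]
      have hkM : (0:ℝ) < (k:ℝ)^M := by positivity
      have hPbM : (0:ℝ) < (P i) ^ (β * M) := Real.rpow_pos_of_pos (hP0 i) _
      have hPs' : (0:ℝ) < (P i) ^ (-s) := Real.rpow_pos_of_pos (hP0 i) _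
      have step1 : B i ≤ exp 1 * ((k:ℝ) * ((P i) ^ (-s) *
          ((M:ℝ)^M * (P i) ^ (β * M) / (k:ℝ)^M))) := by
        simp only [hB_def]
        gcongr
      have e4 : exp 1 * ((k:ℝ) * ((P i) ^ (-s) * ((M:ℝ)^M * (P i) ^ (β * M) / (k:ℝ)^M)))
          = exp 1 * (M:ℝ)^M * ((k:ℝ) ^ (1 - (M:ℝ)) * (P i) ^ (β * M - s)) := by
        have ha2 : (P i) ^ (β * (M:ℝ) - s) = (P i) ^ (β * (M:ℝ)) * (P i) ^ (-s) := by
          rw [← Real.rpow_add (hP0 i)]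
          congr 1 <;> ring_nf
        have hb2 : (k:ℝ) ^ (1 - (M:ℝ)) = (k:ℝ) / (k:ℝ)^M := by
          rw [Real.rpow_sub hk0, Real.rpow_one, Real.rpow_natCast]
        rw [ha2, hb2]
        field_simp
      rw [e4] at step1
      refine step1.trans ?_
      have h12 : (P i) ^ (β * (M:ℝ) - s) ≤ (N:ℝ) ^ (β * (M:ℝ) - s) :=
        Real.rpow_le_rpow (hP0 i).le hiN (by linarith)
      have h13 : (0:ℝ) ≤ (k:ℝ) ^ (1 - (M:ℝ)) := (Real.rpow_pos_of_pos hk0 _).le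
      exact mul_le_mul_of_nonneg_left (mul_le_mul_of_nonneg_left h12 h13) (by positivity)
    calc ∑ i ∈ Finset.range N, B i
        ≤ (N:ℝ) * (exp 1 * (M:ℝ)^M * ((k:ℝ) ^ (1 - (M:ℝ)) * (N:ℝ) ^ (β * M - s))) := by
          have := Finset.sum_le_card_nsmul (Finset.range N) B _ hone
          simpa [nsmul_eq_mul] using this
      _ = exp 1 * (M:ℝ)^M * ((k:ℝ) ^ (1 - (M:ℝ)) * ((N:ℝ) * (N:ℝ) ^ (β * M - s))) := by ring
      _ = exp 1 * (M:ℝ)^M * ((k:ℝ) ^ (1 - (M:ℝ)) * (N:ℝ) ^ q) := by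
          have hNq : (N:ℝ) * (N:ℝ) ^ (β * (M:ℝ) - s) = (N:ℝ) ^ q := by
            rw [hq_def, show β * (M:ℝ) - s + 1 = 1 + (β * (M:ℝ) - s) by ring,
              Real.rpow_add hN0, Real.rpow_one]
          rw [← hNq]
      _ ≤ exp 1 * (M:ℝ)^M * ((k:ℝ) ^ (1 - (M:ℝ)) * ((2:ℝ) ^ q * ((k:ℝ) ^ (1/β)) ^ q)) := by
          have h5 : (N:ℝ) ^ q ≤ (2 * (k:ℝ) ^ (1/β)) ^ q :=
            Real.rpow_le_rpow hN0.le hNup hq0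
          rw [Real.mul_rpow (by norm_num) hkb0.le] at h5
          have h6 : (0:ℝ) ≤ (k:ℝ) ^ (1 - (M:ℝ)) := (Real.rpow_pos_of_pos hk0 _).le
          have h7 : (0:ℝ) < (M:ℝ)^M := by positivity
          gcongr
      _ = Ch * (k:ℝ) ^ E := by
          have h8 : ((k:ℝ) ^ (1/β)) ^ q = (k:ℝ) ^ (1/β * q) := (Real.rpow_mul hk0.le _ _).symm
          have h9 : (k:ℝ) ^ (1 - (M:ℝ)) * (k:ℝ) ^ (1/β * q) = (k:ℝ) ^ (1 - (M:ℝ) + 1/β * q) :=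
            (Real.rpow_add hk0 _ _).symm
          have h10 : 1 - (M:ℝ) + 1/β * q = E := by
            rw [hq_def, hE_def, hs_def]; field_simp; ring
          rw [h8, hCh_def]
          calc exp 1 * (M:ℝ)^M * ((k:ℝ)^(1-(M:ℝ)) * ((2:ℝ)^q * (k:ℝ)^(1/β*q)))
              = exp 1 * (M:ℝ)^M * (2:ℝ)^q * ((k:ℝ)^(1-(M:ℝ)) * (k:ℝ)^(1/β*q)) := by ring
            _ = exp 1 * (M:ℝ)^M * (2:ℝ)^q * (k:ℝ)^E := by rw [h9, h10]
  -- tail bound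
  have htail : ∑' i : ℕ, B (i + N) ≤ Ct * (k:ℝ) ^ E := by
    have hBs : Summable (fun i : ℕ => B (i + N)) := (summable_nat_add_iff N).2 hsummB
    have hRs : Summable (fun i : ℕ => exp 1 * (k:ℝ) * ((N + 1 + i : ℕ):ℝ) ^ (-s)) :=
      (summable_shift' s hs (N + 1)).mul_left _
    have hconst : ∑' i : ℕ, exp 1 * (k:ℝ) * ((N + 1 + i : ℕ):ℝ) ^ (-s)
        = exp 1 * (k:ℝ) * ∑' i : ℕ, ((N + 1 + i : ℕ):ℝ) ^ (-s) := tsum_mul_left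
    have hone : ∀ i : ℕ, B (i + N) ≤ exp 1 * (k:ℝ) * ((N + 1 + i : ℕ):ℝ) ^ (-s) := by
      intro i
      have hPe : P (i + N) = ((N + 1 + i : ℕ):ℝ) := by
        simp only [hP_def]; congr 1; omega
      have hps := (Real.rpow_pos_of_pos (hP0 (i + N)) (-s)).le
      calc B (i + N) ≤ exp 1 * ((k:ℝ) * ((P (i + N)) ^ (-s) * 1)) := by
            simp only [hB_def]
            gcongr
            exact hexp1 _
        _ = exp 1 * (k:ℝ) * (P (i + N)) ^ (-s) := by ring
        _ = exp 1 * (k:ℝ) * ((N + 1 + i : ℕ):ℝ) ^ (-s) := by rw [hPe]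
    have h2 := Summable.tsum_le_tsum hone hBs hRs
    rw [hconst] at h2
    have h3 := tailE' hs hN1
    have h4 : (N:ℝ) ^ (1 - s) ≤ ((k:ℝ) ^ (1/β)) ^ (1 - s) :=
      Real.rpow_le_rpow_of_nonpos hkb0 hNlow (by linarith)
    have hek : (0:ℝ) ≤ exp 1 * (k:ℝ) := by positivity
    calc ∑' i : ℕ, B (i + N) ≤ exp 1 * (k:ℝ) * ∑' i : ℕ, ((N + 1 + i : ℕ):ℝ) ^ (-s) := h2
      _ ≤ exp 1 * (k:ℝ) * ((N:ℝ) ^ (1 - s) / (s - 1)) := mul_le_mul_of_nonneg_left h3 hek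
      _ ≤ exp 1 * (k:ℝ) * (((k:ℝ) ^ (1/β)) ^ (1 - s) / (s - 1)) := by gcongr
      _ = Ct * (k:ℝ) ^ E := by
          rw [← Real.rpow_mul hk0.le]
          have h10 : (k:ℝ) * (k:ℝ) ^ (1/β * (1 - s)) = (k:ℝ) ^ (1 + 1/β * (1 - s)) := by
            rw [Real.rpow_add hk0, Real.rpow_one]
          have h11 : 1 + 1/β * (1 - s) = E := by
            rw [hE_def, hs_def]; field_simp; ring
          rw [hCt_def]
          calc exp 1 * (k:ℝ) * ((k:ℝ) ^ (1/β * (1 - s)) / (s - 1))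
              = exp 1 / (s - 1) * ((k:ℝ) * (k:ℝ) ^ (1/β * (1 - s))) := by
                field_simp
            _ = exp 1 / (s - 1) * (k:ℝ) ^ E := by rw [h10, h11]
  -- assemble
  have split : ∑' m : ℕ, B m = ∑ i ∈ Finset.range N, B i + ∑' i : ℕ, B (i + N) :=
    (Summable.sum_add_tsum_nat_add N hsummB).symm
  calc |(∑' m : ℕ, F m) - ∑' m : ℕ, G m| = |∑' m : ℕ, (F m - G m)| := by
        rw [Summable.tsum_sub hsumF hsumG]
    _ ≤ ∑' m : ℕ, |F m - G m| := by
        have h := norm_tsum_le_tsum_norm (f := fun m => F m - G m)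
          (by simpa [Real.norm_eq_abs] using hsumFG)
        simpa [Real.norm_eq_abs] using h
    _ ≤ ∑' m : ℕ, B m := Summable.tsum_le_tsum hFG hsumFG hsummB
    _ = ∑ i ∈ Finset.range N, B i + ∑' i : ℕ, B (i + N) := split
    _ ≤ Ch * (k:ℝ) ^ E + Ct * (k:ℝ) ^ E := add_le_add hhead htail
    _ = (Ch + Ct) * (k:ℝ) ^ E := by ring
end

section
/- Let α > 1 and β > 0 be real numbers. Then there exists a constant C > 0 such that for all natural numbers k ≥ 1, ∑_{n=1}^∞ n^{-(α+β)} (1 - n^{-β})^k ≤ C · k^{-(α+β-1)/β}. -/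
open Finset

/-- `t ^ θ * exp (-t) ≤ 1 + m ^ m` with `m = ⌈θ⌉₊`. -/
lemma aux_rpow_mul_exp_neg_le (θ t : ℝ) (hθ : 0 < θ) (ht : 0 ≤ t) :
    t ^ θ * Real.exp (-t) ≤ 1 + ((⌈θ⌉₊ : ℝ)) ^ (⌈θ⌉₊ : ℕ) := by
  set m : ℕ := ⌈θ⌉₊ with hm
  have hm1 : 1 ≤ m := Nat.one_le_ceil_iff.mpr hθ
  have hmpos : (0:ℝ) < m := by exact_mod_cast hm1
  have hmm : (0:ℝ) ≤ (m:ℝ) ^ m := by positivity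
  rcases le_or_gt t 1 with h1 | h1
  · have h2 : t ^ θ ≤ 1 := Real.rpow_le_one ht h1 hθ.le
    have h3 : Real.exp (-t) ≤ 1 := Real.exp_le_one_iff.mpr (by linarith)
    nlinarith [Real.exp_pos (-t), Real.rpow_nonneg ht θ]
  · -- 1 ≤ t
    have htpos : 0 < t := by linarith
    have h2 : t ^ θ ≤ t ^ (m:ℝ) :=
      Real.rpow_le_rpow_of_exponent_le h1.le (Nat.le_ceil θ)
    have h3 : t ^ (m:ℝ) = t ^ m := Real.rpow_natCast t m
    have h4 : t ^ m ≤ (m:ℝ) ^ m * Real.exp t := by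
      have ht' : t = (m:ℝ) * (t / m) := by field_simp; try ring
      have h5 : (t / m) ≤ Real.exp (t / m) := by
        have := Real.add_one_le_exp (t / m); linarith
      have h6 : (t / m) ^ m ≤ (Real.exp (t / m)) ^ m :=
        pow_le_pow_left₀ (by positivity) h5 m
      have h7 : (Real.exp (t / m)) ^ m = Real.exp t := by
        rw [← Real.exp_nat_mul]
        congr 1
        field_simp; try ring
      calc t ^ m = ((m:ℝ) * (t / m)) ^ m := by rw [← ht']
        _ = (m:ℝ) ^ m * (t / m) ^ m := mul_pow _ _ _
        _ ≤ (m:ℝ) ^ m * Real.exp t := by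
            rw [← h7]; exact mul_le_mul_of_nonneg_left h6 (by positivity)
    have h8 : t ^ θ * Real.exp (-t) ≤ ((m:ℝ) ^ m * Real.exp t) * Real.exp (-t) := by
      apply mul_le_mul_of_nonneg_right _ (Real.exp_nonneg _)
      calc t ^ θ ≤ t ^ (m:ℝ) := h2
        _ = t ^ m := h3
        _ ≤ (m:ℝ) ^ m * Real.exp t := h4
    have h9 : ((m:ℝ) ^ m * Real.exp t) * Real.exp (-t) = (m:ℝ) ^ m := by
      rw [mul_assoc, ← Real.exp_add]; simp
    rw [h9] at h8
    linarith

/-- Telescoping step: for real `y ≥ 2` and `q > 0`,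
`q * y ^ (-(q+1)) ≤ (y-1) ^ (-q) - y ^ (-q)`. -/
lemma aux_tail_step (q y : ℝ) (hq : 0 < q) (hy : 2 ≤ y) :
    q * y ^ (-(q + 1)) ≤ (y - 1) ^ (-q) - y ^ (-q) := by
  have hy0 : (0:ℝ) < y := by linarith
  have hy1 : (0:ℝ) < y - 1 := by linarith
  set x : ℝ := 1 / y with hx
  have hx0 : 0 < x := by positivity
  have hx1 : x < 1 := by rw [hx]; rw [div_lt_one hy0]; linarith
  have h1x : 0 < 1 - x := by linarith
  -- key: (1-x)^q * (1 + q*x) ≤ 1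
  have key : (1 - x) ^ q * (1 + q * x) ≤ 1 := by
    have e1 : (1 - x) ^ q ≤ Real.exp (-x) ^ q := by
      apply Real.rpow_le_rpow h1x.le _ hq.le
      have := Real.add_one_le_exp (-x); linarith
    have e2 : Real.exp (-x) ^ q = Real.exp (-x * q) := (Real.exp_mul (-x) q).symm
    have e3 : 1 + q * x ≤ Real.exp (q * x) := by
      have := Real.add_one_le_exp (q * x); linarith
    calc (1 - x) ^ q * (1 + q * x)
        ≤ Real.exp (-x * q) * Real.exp (q * x) := by
          apply mul_le_mul (e2 ▸ e1) e3 (by positivity)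
          exact Real.exp_nonneg _
      _ = Real.exp (-x * q + q * x) := (Real.exp_add _ _).symm
      _ = 1 := by rw [show -x * q + q * x = 0 by ring, Real.exp_zero]
  have hpow : (0:ℝ) < (1 - x) ^ q := Real.rpow_pos_of_pos h1x q
  have key2 : 1 + q * x ≤ (1 - x) ^ (-q) := by
    rw [Real.rpow_neg h1x.le]
    have h2 : (1 + q * x) * (1 - x) ^ q ≤ 1 := by nlinarith [key]
    calc 1 + q * x = (1 + q * x) * (1 - x) ^ q * ((1 - x) ^ q)⁻¹ := by field_simp; try ring
      _ ≤ 1 * ((1 - x) ^ q)⁻¹ := mul_le_mul_of_nonneg_right h2 (by positivity)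
      _ = ((1 - x) ^ q)⁻¹ := one_mul _
  -- rewrite y - 1 = y * (1 - x)
  have hmul : y - 1 = y * (1 - x) := by rw [hx]; field_simp; try ring
  have h5 : (y - 1) ^ (-q) = y ^ (-q) * (1 - x) ^ (-q) := by
    rw [hmul, Real.mul_rpow hy0.le h1x.le]
  have h6 : y ^ (-q) * (1 + q * x) ≤ (y - 1) ^ (-q) := by
    rw [h5]
    exact mul_le_mul_of_nonneg_left key2 (Real.rpow_nonneg hy0.le _)
  have h7 : y ^ (-(q + 1)) = y ^ (-q) * x := by
    rw [show -(q+1) = -q + (-1) by ring, Real.rpow_add hy0, Real.rpow_neg_one, hx]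
    ring
  have hyq : (0:ℝ) < y ^ (-q) := Real.rpow_pos_of_pos hy0 _
  nlinarith [h6, hyq]

/-- Tail bound: `∑_{N < n ≤ M} n^{-(q+1)} ≤ q⁻¹ N^{-q}` for `N ≥ 1`. -/
lemma aux_tail_sum (q : ℝ) (hq : 0 < q) (N M : ℕ) (hN : 1 ≤ N) :
    ∑ n ∈ Finset.Ioc N M, (n:ℝ) ^ (-(q + 1)) ≤ q⁻¹ * (N:ℝ) ^ (-q) := by
  set g : ℕ → ℝ := fun n => (n:ℝ) ^ (-q) with hg
  have step : ∀ n ∈ Finset.Ioc N M, (n:ℝ) ^ (-(q+1)) ≤ q⁻¹ * (g (n-1) - g n) := by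
    intro n hn
    rw [Finset.mem_Ioc] at hn
    have hn2 : 2 ≤ n := by omega
    have h2 : (2:ℝ) ≤ (n:ℝ) := by exact_mod_cast hn2
    have hstep := aux_tail_step q (n:ℝ) hq h2
    have hcast : ((n - 1 : ℕ) : ℝ) = (n:ℝ) - 1 := by
      have h1n : (1:ℕ) ≤ n := by omega
      push_cast [Nat.cast_sub h1n]; ring
    simp only [hg, hcast]
    calc (n:ℝ) ^ (-(q+1)) = q⁻¹ * (q * (n:ℝ) ^ (-(q+1))) :=
          (inv_mul_cancel_left₀ hq.ne' _).symm
      _ ≤ q⁻¹ * (((n:ℝ) - 1) ^ (-q) - (n:ℝ) ^ (-q)) :=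
          mul_le_mul_of_nonneg_left hstep (by positivity)
  have tele : ∀ M' : ℕ, N ≤ M' → ∑ n ∈ Finset.Ioc N M', (g (n-1) - g n) = g N - g M' := by
    intro M' hM'
    induction M', hM' using Nat.le_induction with
    | base => simp
    | succ M' hM' ih =>
        rw [Finset.sum_Ioc_succ_top (by omega), ih]
        simp only [Nat.add_sub_cancel]
        ring
  rcases le_or_gt N M with hNM | hNM
  · calc ∑ n ∈ Finset.Ioc N M, (n:ℝ) ^ (-(q+1))
        ≤ ∑ n ∈ Finset.Ioc N M, q⁻¹ * (g (n-1) - g n) := Finset.sum_le_sum step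
      _ = q⁻¹ * (g N - g M) := by rw [← Finset.mul_sum, tele M hNM]
      _ ≤ q⁻¹ * g N := by
          have h0 : 0 ≤ g M := Real.rpow_nonneg (Nat.cast_nonneg M) _
          have hqi : 0 ≤ q⁻¹ := by positivity
          nlinarith
  · rw [Finset.Ioc_eq_empty (by omega)]
    simp only [Finset.sum_empty]
    positivity

theorem tsum_rpow_one_sub_rpow_pow_le (α β : ℝ) (hα : 1 < α) (hβ : 0 < β) :
    ∃ C : ℝ, 0 < C ∧ ∀ k : ℕ, 1 ≤ k →
      (∑' n : ℕ+, (n : ℝ) ^ (-(α + β)) * (1 - (n : ℝ) ^ (-β)) ^ k) ≤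
        C * (k : ℝ) ^ (-(α + β - 1) / β) := by
  have hq : 0 < α + β - 1 := by linarith
  set q : ℝ := α + β - 1 with hqdef
  set θ : ℝ := (α + β) / β with hθdef
  have hθ : 0 < θ := by positivity
  set m : ℕ := ⌈θ⌉₊ with hmdef
  set C0 : ℝ := 1 + (m:ℝ) ^ m with hC0def
  have hC0 : 0 < C0 := by positivity
  refine ⟨2 * C0 + q⁻¹, by positivity, ?_⟩
  intro k hk
  have hkR : (1:ℝ) ≤ (k:ℝ) := by exact_mod_cast hk
  have hkpos : (0:ℝ) < (k:ℝ) := by linarith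
  have hrpos : (0:ℝ) < (k:ℝ) ^ (-(α + β - 1) / β) := Real.rpow_pos_of_pos hkpos _
  apply tsum_le_of_sum_le' (by positivity)
  intro F
  -- setup N
  have hv1 : (1:ℝ) ≤ (k:ℝ) ^ (β⁻¹) := by
    calc (1:ℝ) = 1 ^ (β⁻¹) := (Real.one_rpow _).symm
      _ ≤ (k:ℝ) ^ (β⁻¹) := Real.rpow_le_rpow zero_le_one hkR (by positivity)
  set N : ℕ := ⌈(k:ℝ) ^ (β⁻¹)⌉₊ with hNdef
  have hN1 : 1 ≤ N := Nat.one_le_ceil_iff.mpr (by linarith)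
  have hNge : (k:ℝ) ^ (β⁻¹) ≤ (N:ℝ) := Nat.le_ceil _
  have hNle : (N:ℝ) ≤ 2 * (k:ℝ) ^ (β⁻¹) := by
    have := Nat.ceil_lt_add_one (show (0:ℝ) ≤ (k:ℝ) ^ (β⁻¹) by positivity)
    rw [← hNdef] at this
    linarith
  have hterm : ∀ n : ℕ+, (0:ℝ) < ((n:ℕ):ℝ) := fun n => by exact_mod_cast n.pos
  have hterm1 : ∀ n : ℕ+, (1:ℝ) ≤ ((n:ℕ):ℝ) := fun n => by exact_mod_cast n.one_le
  -- exponent computations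
  have hexpA : β⁻¹ + -θ = -(α + β - 1) / β := by
    rw [hθdef]; field_simp; try ring
  have hexpB : β⁻¹ * -q = -(α + β - 1) / β := by
    rw [hqdef]; field_simp; try ring
  -- bound A : each term ≤ C0 * k^(-θ)
  have boundA : ∀ n : ℕ+,
      ((n:ℕ):ℝ) ^ (-(α + β)) * (1 - ((n:ℕ):ℝ) ^ (-β)) ^ k ≤ C0 * (k:ℝ) ^ (-θ) := by
    intro n
    have hn0 := hterm n
    have hn1 := hterm1 n
    set x : ℝ := ((n:ℕ):ℝ) ^ (-β) with hxdef
    have hx0 : 0 < x := Real.rpow_pos_of_pos hn0 _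
    have hx1 : x ≤ 1 := Real.rpow_le_one_of_one_le_of_nonpos hn1 (by linarith)
    have h1x : 0 ≤ 1 - x := by linarith
    set t : ℝ := (k:ℝ) * x with htdef
    have ht0 : 0 < t := by positivity
    have e1 : (1 - x) ^ k ≤ Real.exp (-t) := by
      calc (1 - x) ^ k ≤ (Real.exp (-x)) ^ k :=
            pow_le_pow_left₀ h1x (by have := Real.add_one_le_exp (-x); linarith) k
        _ = Real.exp (-t) := by
            rw [← Real.exp_nat_mul]
            congr 1
            rw [htdef]; ring
    have e2 : Real.exp (-t) ≤ C0 * t ^ (-θ) := by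
      have h := aux_rpow_mul_exp_neg_le θ t hθ ht0.le
      rw [← hmdef, ← hC0def] at h
      have htθ : 0 < t ^ θ := Real.rpow_pos_of_pos ht0 _
      rw [Real.rpow_neg ht0.le]
      calc Real.exp (-t) = (t ^ θ * Real.exp (-t)) * (t ^ θ)⁻¹ := by field_simp; try ring
        _ ≤ C0 * (t ^ θ)⁻¹ := mul_le_mul_of_nonneg_right h (by positivity)
    have e3 : t ^ (-θ) = (k:ℝ) ^ (-θ) * ((n:ℕ):ℝ) ^ (α + β) := by
      have hβθ : -β * -θ = α + β := by rw [hθdef]; field_simp; try ring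
      rw [htdef, Real.mul_rpow hkpos.le hx0.le, hxdef, ← Real.rpow_mul hn0.le, hβθ]
    calc ((n:ℕ):ℝ) ^ (-(α + β)) * (1 - x) ^ k
        ≤ ((n:ℕ):ℝ) ^ (-(α + β)) * (C0 * t ^ (-θ)) := by
          apply mul_le_mul_of_nonneg_left (e1.trans e2) (Real.rpow_nonneg hn0.le _)
      _ = C0 * (k:ℝ) ^ (-θ) * (((n:ℕ):ℝ) ^ (-(α + β)) * ((n:ℕ):ℝ) ^ (α + β)) := by
          rw [e3]; ring
      _ = C0 * (k:ℝ) ^ (-θ) := by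
          rw [← Real.rpow_add hn0,
            show (-(α + β)) + (α + β) = 0 from by ring, Real.rpow_zero, mul_one]
  -- bound B : each term ≤ n^(-(α+β))
  have boundB : ∀ n : ℕ+,
      ((n:ℕ):ℝ) ^ (-(α + β)) * (1 - ((n:ℕ):ℝ) ^ (-β)) ^ k ≤ ((n:ℕ):ℝ) ^ (-(α + β)) := by
    intro n
    have hn0 := hterm n
    have hn1 := hterm1 n
    have hx0 : 0 < ((n:ℕ):ℝ) ^ (-β) := Real.rpow_pos_of_pos hn0 _
    have hx1 : ((n:ℕ):ℝ) ^ (-β) ≤ 1 := Real.rpow_le_one_of_one_le_of_nonpos hn1 (by linarith)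
    nth_rewrite 2 [← mul_one (((n:ℕ):ℝ) ^ (-(α + β)))]
    apply mul_le_mul_of_nonneg_left _ (Real.rpow_nonneg hn0.le _)
    exact pow_le_one₀ (by linarith) (by linarith)
  -- nonnegativity of each term
  have htermnn : ∀ n : ℕ+, 0 ≤ ((n:ℕ):ℝ) ^ (-(α + β)) * (1 - ((n:ℕ):ℝ) ^ (-β)) ^ k := by
    intro n
    have hn0 := hterm n
    have hn1 := hterm1 n
    have hx1 : ((n:ℕ):ℝ) ^ (-β) ≤ 1 := Real.rpow_le_one_of_one_le_of_nonpos hn1 (by linarith)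
    exact mul_nonneg (Real.rpow_nonneg hn0.le _) (pow_nonneg (by linarith) k)
  rw [← Finset.sum_filter_add_sum_filter_not F (fun n : ℕ+ => (n:ℕ) ≤ N)]
  -- Part A
  have cardle : (F.filter (fun n : ℕ+ => (n:ℕ) ≤ N)).card ≤ N := by
    have h := Finset.card_le_card_of_injOn (s := F.filter (fun n : ℕ+ => (n:ℕ) ≤ N)) (t := Finset.Icc 1 N) (fun n : ℕ+ => (n:ℕ))
      (fun n hn => by
        rw [Finset.mem_coe, Finset.mem_filter] at hn
        exact Finset.mem_coe.mpr (Finset.mem_Icc.mpr ⟨n.pos, hn.2⟩))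
      (fun a _ b _ h => PNat.coe_injective h)
    simpa [Nat.card_Icc] using h
  have partA : ∑ n ∈ F.filter (fun n : ℕ+ => (n:ℕ) ≤ N),
      ((n:ℕ):ℝ) ^ (-(α + β)) * (1 - ((n:ℕ):ℝ) ^ (-β)) ^ k
      ≤ 2 * C0 * (k:ℝ) ^ (-(α + β - 1) / β) := by
    have h1 := Finset.sum_le_card_nsmul (F.filter (fun n : ℕ+ => (n:ℕ) ≤ N))
      (fun n => ((n:ℕ):ℝ) ^ (-(α + β)) * (1 - ((n:ℕ):ℝ) ^ (-β)) ^ k)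
      (C0 * (k:ℝ) ^ (-θ)) (fun n _ => boundA n)
    rw [nsmul_eq_mul] at h1
    have hkθ : (0:ℝ) < (k:ℝ) ^ (-θ) := Real.rpow_pos_of_pos hkpos _
    have h2 : ((F.filter (fun n : ℕ+ => (n:ℕ) ≤ N)).card : ℝ) ≤ (N:ℝ) := by exact_mod_cast cardle
    calc ∑ n ∈ F.filter (fun n : ℕ+ => (n:ℕ) ≤ N),
          ((n:ℕ):ℝ) ^ (-(α + β)) * (1 - ((n:ℕ):ℝ) ^ (-β)) ^ k
        ≤ ((F.filter (fun n : ℕ+ => (n:ℕ) ≤ N)).card : ℝ) * (C0 * (k:ℝ) ^ (-θ)) := h1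
      _ ≤ (2 * (k:ℝ) ^ (β⁻¹)) * (C0 * (k:ℝ) ^ (-θ)) := by
          apply mul_le_mul_of_nonneg_right (h2.trans hNle) (by positivity)
      _ = 2 * C0 * ((k:ℝ) ^ (β⁻¹) * (k:ℝ) ^ (-θ)) := by ring
      _ = 2 * C0 * (k:ℝ) ^ (-(α + β - 1) / β) := by
          rw [← Real.rpow_add hkpos, hexpA]
  -- Part B
  have partB : ∑ n ∈ F.filter (fun n : ℕ+ => ¬ (n:ℕ) ≤ N),
      ((n:ℕ):ℝ) ^ (-(α + β)) * (1 - ((n:ℕ):ℝ) ^ (-β)) ^ k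
      ≤ q⁻¹ * (k:ℝ) ^ (-(α + β - 1) / β) := by
    set G : Finset ℕ := (F.filter (fun n : ℕ+ => ¬ (n:ℕ) ≤ N)).image (fun n : ℕ+ => (n:ℕ)) with hG
    have hsub : G ⊆ Finset.Ioc N (G.sup id) := by
      intro x hx
      rw [Finset.mem_Ioc]
      constructor
      · rw [hG, Finset.mem_image] at hx
        obtain ⟨n, hn, rfl⟩ := hx
        rw [Finset.mem_filter] at hn
        omega
      · exact Finset.le_sup (f := id) hx
    calc ∑ n ∈ F.filter (fun n : ℕ+ => ¬ (n:ℕ) ≤ N),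
          ((n:ℕ):ℝ) ^ (-(α + β)) * (1 - ((n:ℕ):ℝ) ^ (-β)) ^ k
        ≤ ∑ n ∈ F.filter (fun n : ℕ+ => ¬ (n:ℕ) ≤ N), ((n:ℕ):ℝ) ^ (-(α + β)) :=
          Finset.sum_le_sum (fun n _ => boundB n)
      _ = ∑ x ∈ G, (x:ℝ) ^ (-(α + β)) := by
          rw [hG, Finset.sum_image (fun a _ b _ h => PNat.coe_injective h)]
      _ ≤ ∑ x ∈ Finset.Ioc N (G.sup id), (x:ℝ) ^ (-(α + β)) := by
          apply Finset.sum_le_sum_of_subset_of_nonneg hsub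
          intro i _ _
          exact Real.rpow_nonneg (Nat.cast_nonneg i) _
      _ = ∑ x ∈ Finset.Ioc N (G.sup id), (x:ℝ) ^ (-(q + 1)) := by
          apply Finset.sum_congr rfl
          intro x _
          congr 1
          rw [hqdef]; ring
      _ ≤ q⁻¹ * (N:ℝ) ^ (-q) := aux_tail_sum q hq N (G.sup id) hN1
      _ ≤ q⁻¹ * (k:ℝ) ^ (-(α + β - 1) / β) := by
          apply mul_le_mul_of_nonneg_left _ (by positivity)
          have h1 : (N:ℝ) ^ (-q) ≤ ((k:ℝ) ^ (β⁻¹)) ^ (-q) :=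
            Real.rpow_le_rpow_of_nonpos (by positivity) hNge (by linarith)
          calc (N:ℝ) ^ (-q) ≤ ((k:ℝ) ^ (β⁻¹)) ^ (-q) := h1
            _ = (k:ℝ) ^ (β⁻¹ * -q) := (Real.rpow_mul hkpos.le _ _).symm
            _ = (k:ℝ) ^ (-(α + β - 1) / β) := by rw [hexpB]
  calc _ ≤ 2 * C0 * (k:ℝ) ^ (-(α + β - 1) / β) + q⁻¹ * (k:ℝ) ^ (-(α + β - 1) / β) :=
        add_le_add partA partB
    _ = (2 * C0 + q⁻¹) * (k:ℝ) ^ (-(α + β - 1) / β) := by ring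
end
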